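/- If a commutative ring R has at least 3 nonzero zero-divisors, then the extended zero-divisor graph Γ̃(R) contains a 3-cycle (triangle), i.e., its girth equals 3. -/

import Mathlib

/-- the extended zero-divisor graph Γ̃(R), on the nonzero zero-divisors of R -/
def extGraph (R : Type*) [CommRing R] :
    SimpleGraph {x : R // x ≠ 0 ∧ ∃ y ≠ 0, x * y = 0} where
  Adj a b := a ≠ b ∧ ((a : R) * b = 0 ∨ ∃ z ≠ 0, ((a : R) + b) * z = 0)
  symm := ⟨fun a b => by
    rintro ⟨hne, h | ⟨z, hz, h⟩⟩
    · exact ⟨hne.symm, Or.inl (by rw [mul_comm] at h; exact h)⟩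
    · exact ⟨hne.symm, Or.inr ⟨z, hz, by rw [add_comm] at h; exact h⟩⟩⟩
  loopless := ⟨fun a => by simp⟩

open SimpleGraph

lemma girth_eq_three_of_triangle {V : Type*} (G : SimpleGraph V) {a b c : V}
    (hab : G.Adj a b) (hbc : G.Adj b c) (hca : G.Adj c a) : G.girth = 3 := by
  have hac : a ≠ c := fun h => (h ▸ hca).ne rfl
  have hba : b ≠ a := hab.ne.symm
  have hbcne : b ≠ c := hbc.ne
  let w : G.Walk a a := .cons hab (.cons hbc (.cons hca .nil))
  have hcyc : w.IsCycle := by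
    rw [Walk.cons_isCycle_iff]
    constructor
    · simp [Walk.isPath_def, hba, hbcne, hac, hca.ne]
    · simp [Sym2.eq_iff, hba.symm, hbcne, hac, hca.ne, hab.ne]
  have h1 : G.egirth ≤ 3 := by
    have := le_egirth.mp (le_refl G.egirth) a w hcyc
    calc G.egirth ≤ w.length := this
    _ = 3 := by simp [w]
  have : G.egirth = 3 := le_antisymm h1 three_le_egirth
  simp [girth, this]

section Core

variable {R : Type*} [CommRing R] [Nontrivial R]

/-- a triangle in R-terms -/
def TriData (R : Type*) [CommRing R] : Prop :=
  ∃ x y z : R,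
    (x ≠ 0 ∧ ∃ w ≠ 0, x * w = 0) ∧ (y ≠ 0 ∧ ∃ w ≠ 0, y * w = 0) ∧
    (z ≠ 0 ∧ ∃ w ≠ 0, z * w = 0) ∧
    x ≠ y ∧ y ≠ z ∧ x ≠ z ∧
    (x * y = 0 ∨ ∃ w ≠ 0, (x + y) * w = 0) ∧
    (y * z = 0 ∨ ∃ w ≠ 0, (y + z) * w = 0) ∧
    (z * x = 0 ∨ ∃ w ≠ 0, (z + x) * w = 0)

/-- triangle from a common annihilator: u, v, u+v all killed by z -/
lemma triA {z u v : R} (hz : z ≠ 0) (hu : u ≠ 0) (hv : v ≠ 0) (huv : u ≠ v)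
    (hsum : u + v ≠ 0) (huz : u * z = 0) (hvz : v * z = 0) : TriData R := by
  refine ⟨u, v, u + v, ⟨hu, z, hz, huz⟩, ⟨hv, z, hz, hvz⟩,
    ⟨hsum, z, hz, by linear_combination huz + hvz⟩, huv,
    fun h => hu (by linear_combination -h), fun h => hv (by linear_combination -h),
    ?_, ?_, ?_⟩
  · exact Or.inr ⟨z, hz, by linear_combination huz + hvz⟩
  · exact Or.inr ⟨z, hz, by linear_combination huz + 2 * hvz⟩
  · exact Or.inr ⟨z, hz, by linear_combination 2 * huz + hvz⟩

/-- triangle {a, b, -b} when ab = 0, a ∉ {b, -b}, 2b ≠ 0 -/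
lemma triB {a b : R} (ha : a ≠ 0) (hb : b ≠ 0) (hab : a * b = 0)
    (h1 : a ≠ b) (h2 : a ≠ -b) (h3 : b ≠ -b) : TriData R := by
  refine ⟨a, b, -b, ⟨ha, b, hb, hab⟩, ⟨hb, a, ha, by linear_combination hab⟩,
    ⟨neg_ne_zero.mpr hb, a, ha, by linear_combination -hab⟩,
    h1, h3, h2, Or.inl hab, Or.inr ⟨1, one_ne_zero, by ring⟩,
    Or.inl (by linear_combination -hab)⟩

lemma exists_tri (h3 : ∃ p q r : R,
    (p ≠ 0 ∧ ∃ w ≠ 0, p * w = 0) ∧ (q ≠ 0 ∧ ∃ w ≠ 0, q * w = 0) ∧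
    (r ≠ 0 ∧ ∃ w ≠ 0, r * w = 0) ∧ p ≠ q ∧ p ≠ r ∧ q ≠ r) : TriData R := by
  obtain ⟨p, q, r, hp, hq, hr, hpq, hpr, hqr⟩ := h3
  by_cases hA : ∃ z u v : R, z ≠ 0 ∧ u ≠ 0 ∧ v ≠ 0 ∧ u ≠ v ∧ u + v ≠ 0 ∧
      u * z = 0 ∧ v * z = 0
  · obtain ⟨z, u, v, hz, hu, hv, huv, hsum, huz, hvz⟩ := hA
    exact triA hz hu hv huv hsum huz hvz
  by_cases hB : ∃ a b : R, a ≠ 0 ∧ b ≠ 0 ∧ a * b = 0 ∧ a ≠ b ∧ a ≠ -b ∧ b ≠ -b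
  · obtain ⟨a, b, ha, hb, hab, h1, h2, h4⟩ := hB
    exact triB ha hb hab h1 h2 h4
  by_cases hC : ∃ a b : R, a ≠ 0 ∧ b ≠ 0 ∧ a * b = 0 ∧ a ≠ b ∧ a ≠ -b
  · -- this case leads to a contradiction: R would be F₂ × F₂
    exfalso
    obtain ⟨a, b, ha, hb, hab, h1, h2⟩ := hC
    have h2b : b = -b := by
      by_contra h4
      exact hB ⟨a, b, ha, hb, hab, h1, h2, h4⟩
    have h2a : a = -a := by
      by_contra h4
      exact hB ⟨b, a, hb, ha, by linear_combination hab, fun h => h1 h.symm,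
        fun h => h2 (by linear_combination h), h4⟩
    -- annihilators of a and b are exactly {b} and {a}
    have AnnA : ∀ u : R, u ≠ 0 → u * a = 0 → u = b := by
      intro u hu hua
      by_contra h
      have hub : u + b ≠ 0 := fun hs => h (by linear_combination hs - h2b)
      exact hA ⟨a, u, b, ha, hu, hb, h, hub, hua, by linear_combination hab⟩
    have AnnB : ∀ u : R, u ≠ 0 → u * b = 0 → u = a := by
      intro u hu hub
      by_contra h
      have hua : u + a ≠ 0 := fun hs => h (by linear_combination hs - h2a)
      exact hA ⟨b, u, a, hb, hu, ha, h, hua, hub, hab⟩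
    -- a and b are idempotent
    have haa : a * a = a := by
      by_cases h : a * a = 0
      · exact absurd (AnnA a ha h) h1
      · exact AnnB (a * a) h (by linear_combination a * hab)
    have hbb : b * b = b := by
      by_cases h : b * b = 0
      · exact absurd (AnnB b hb h).symm h1
      · exact AnnA (b * b) h (by linear_combination b * hab)
    -- a + b = 1
    have hone : a + b = 1 := by
      by_contra h
      have he : (1 : R) - a - b ≠ 0 := fun hs => h (by linear_combination -hs)
      have e1 : ((1 : R) - a - b) * a = 0 := by linear_combination -haa - hab
      have e2 : ((1 : R) - a - b) * b = 0 := by linear_combination -hbb - hab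
      have := AnnA _ he e1
      have := AnnB _ he e2
      exact h1 (by linear_combination ‹(1:R) - a - b = b› - ‹(1:R) - a - b = a›)
    -- third zero-divisor distinct from a and b
    obtain ⟨c, ⟨hc0, w, hw, hcw⟩, hca, hcb⟩ :
        ∃ c : R, (c ≠ 0 ∧ ∃ w ≠ 0, c * w = 0) ∧ c ≠ a ∧ c ≠ b := by
      by_cases g1 : p ≠ a ∧ p ≠ b
      · exact ⟨p, hp, g1⟩
      by_cases g2 : q ≠ a ∧ q ≠ b
      · exact ⟨q, hq, g2⟩
      push_neg at g1 g2
      by_cases gpa : p = a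
      · have gq : q = b := g2 (fun h => hpq (by rw [gpa, h]))
        exact ⟨r, hr, fun h => hpr (by rw [gpa, h]), fun h => hqr (by rw [gq, h])⟩
      · have gp : p = b := g1 gpa
        have gq : q = a := by
          by_contra h
          exact hpq (by rw [gp, g2 h])
        exact ⟨r, hr, fun h => hqr (by rw [gq, h]), fun h => hpr (by rw [gp, h])⟩
    -- split on c*a and c*b
    by_cases k1 : c * a = 0 <;> by_cases k2 : c * b = 0
    · exact hc0 (by linear_combination k1 + k2 - c * hone)
    · have hk : c * b = b := AnnA (c * b) k2 (by linear_combination c * hab)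
      exact hcb (by linear_combination -c * hone + k1 + hk)
    · have hk : c * a = a := AnnB (c * a) k1 (by linear_combination c * hab)
      exact hca (by linear_combination -c * hone + k2 + hk)
    · have hk1 : c * a = a := AnnB (c * a) k1 (by linear_combination c * hab)
      have hk2 : c * b = b := AnnA (c * b) k2 (by linear_combination c * hab)
      have hc1 : c = 1 := by linear_combination (1 - c) * hone + hk1 + hk2
      exact hw (by linear_combination hcw - w * hc1)
  -- remaining: every pair of nonzero elements with product 0 are equal or negatives
  have H3 : ∀ a b : R, a ≠ 0 → b ≠ 0 → a * b = 0 → a = b ∨ a = -b := by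
    intro a b ha hb hab
    by_contra h
    push_neg at h
    exact hC ⟨a, b, ha, hb, hab, h.1, h.2⟩
  -- every nonzero zero-divisor squares to zero
  have Hsq : ∀ x : R, x ≠ 0 → (∃ w ≠ 0, x * w = 0) → x * x = 0 := by
    rintro x hx ⟨w, hw, hxw⟩
    rcases H3 x w hx hw hxw with h | h
    · rw [h] at hxw ⊢; exact hxw
    · have hw' : w = -x := by linear_combination h
      rw [hw'] at hxw
      linear_combination -hxw
  -- pick x, y distinct nonzero zero-divisors with x ≠ -y
  obtain ⟨x, y, hx, hy, hxy, hxny⟩ :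
      ∃ x y : R, (x ≠ 0 ∧ ∃ w ≠ 0, x * w = 0) ∧ (y ≠ 0 ∧ ∃ w ≠ 0, y * w = 0) ∧
        x ≠ y ∧ x ≠ -y := by
    by_cases hqp : q = -p
    · exact ⟨p, r, hp, hr, hpr, fun h => hqr (by rw [hqp]; linear_combination -h)⟩
    · exact ⟨p, q, hp, hq, hpq, fun h => hqp (by linear_combination h)⟩
  have hxx : x * x = 0 := Hsq x hx.1 hx.2
  have hyy : y * y = 0 := Hsq y hy.1 hy.2
  -- show x * y = 0
  have hmul : x * y = 0 := by
    by_contra hne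
    have key : ∀ a b : R, a ≠ 0 → a * a = 0 → a * b ≠ 0 → a * b = a ∨ a * b = -a := by
      intro a b ha haa hab
      by_cases h1 : a * b = a
      · exact Or.inl h1
      · right
        by_contra h2
        have hsum : a + a * b ≠ 0 := fun h => h2 (by linear_combination h)
        exact hA ⟨a, a, a * b, ha, ha, hab, fun h => h1 h.symm, hsum, haa,
          by linear_combination b * haa⟩
    have k1 : x * y = x ∨ x * y = -x := key x y hx.1 hxx hne
    have k2 : x * y = y ∨ x * y = -y := by
      have := key y x hy.1 hyy (fun h => hne (by linear_combination h))
      rcases this with h | h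
      · exact Or.inl (by linear_combination h)
      · exact Or.inr (by linear_combination h)
    rcases k1 with k1 | k1 <;> rcases k2 with k2 | k2
    · exact hxy (by linear_combination k2 - k1)
    · exact hxny (by linear_combination k2 - k1)
    · exact hxny (by linear_combination k1 - k2)
    · exact hxy (by linear_combination k1 - k2)
  rcases H3 x y hx.1 hy.1 hmul with h | h
  · exact absurd h hxy
  · exact absurd h hxny

end Core

theorem stmt2 {R : Type*} [CommRing R] [Nontrivial R]
    (h3 : ∃ a b c : {x : R // x ≠ 0 ∧ ∃ y ≠ 0, x * y = 0},
      a ≠ b ∧ a ≠ c ∧ b ≠ c) :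
    (extGraph R).girth = 3 := by
  have htri : TriData R := by
    apply exists_tri
    obtain ⟨a, b, c, hab, hac, hbc⟩ := h3
    exact ⟨a, b, c, a.2, b.2, c.2,
      fun h => hab (Subtype.ext h), fun h => hac (Subtype.ext h),
      fun h => hbc (Subtype.ext h)⟩
  obtain ⟨x, y, z, hx, hy, hz, hxy, hyz, hxz, axy, ayz, azx⟩ := htri
  exact girth_eq_three_of_triangle (extGraph R)
    (a := ⟨x, hx⟩) (b := ⟨y, hy⟩) (c := ⟨z, hz⟩)
    ⟨fun h => hxy (congrArg Subtype.val h), axy⟩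
    ⟨fun h => hyz (congrArg Subtype.val h), ayz⟩
    ⟨fun h => (hxz (congrArg Subtype.val h).symm), azx⟩
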